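/- (Relaxation theorem.) For every logical constraint E over V identifiers and T types and every typing environment Γ, the continuous semantics evaluated at the binary matrix B(Γ) equals 1 if and only if Γ satisfies E, i.e., ⟦E⟧_{B(Γ)} = 1 ↔ Γ ⊨ E. -/

import Mathlib

inductive Formula (V T : ℕ) : Type
  | atom : Fin V → Fin T → Formula V T
  | not  : Formula V T → Formula V T
  | and  : Formula V T → Formula V T → Formula V T
  | or   : Formula V T → Formula V T → Formula V T

/-- Continuous semantics of a logical constraint w.r.t. a real V × T matrix. -/
def sem {V T : ℕ} (P : Matrix (Fin V) (Fin T) ℝ) : Formula V T → ℝ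
  | .atom v τ  => P v τ
  | .not E     => 1 - sem P E
  | .and E₁ E₂ => sem P E₁ * sem P E₂
  | .or E₁ E₂  => sem P E₁ + sem P E₂ - sem P E₁ * sem P E₂

/-- Logical satisfaction relation for a typing environment. -/
def sat {V T : ℕ} (Γ : Fin V → Fin T) : Formula V T → Prop
  | .atom v τ  => Γ v = τ
  | .not E     => ¬ sat Γ E
  | .and E₁ E₂ => sat Γ E₁ ∧ sat Γ E₂
  | .or E₁ E₂  => sat Γ E₁ ∨ sat Γ E₂

/-- Binary matrix of a typing environment. -/
def B {V T : ℕ} (Γ : Fin V → Fin T) : Matrix (Fin V) (Fin T) ℝ :=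
  fun v τ => if Γ v = τ then 1 else 0

open Classical in
lemma sem_ite {V T : ℕ} (E : Formula V T) (Γ : Fin V → Fin T) :
    sem (B Γ) E = if sat Γ E then 1 else 0 := by
  induction E with
  | atom v τ => by_cases h : Γ v = τ <;> simp [sem, sat, B, h]
  | not E ih => simp [sem, sat, ih]; split <;> simp_all
  | and E₁ E₂ ih₁ ih₂ =>
      simp [sem, sat, ih₁, ih₂]; by_cases h₁ : sat Γ E₁ <;> by_cases h₂ : sat Γ E₂ <;> simp_all
  | or E₁ E₂ ih₁ ih₂ =>
      simp [sem, sat, ih₁, ih₂]; split <;> split <;> simp_all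

theorem relaxation {V T : ℕ} (E : Formula V T) (Γ : Fin V → Fin T) :
    sem (B Γ) E = 1 ↔ sat Γ E := by
  classical
  rw [sem_ite]
  split <;> simp_all
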